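/- Let V be a 4-dimensional real inner product space with nondegenerate metric g and orthonormal-type basis e₁,...,e₄ (with signs εᵢ = g(eᵢ,eᵢ) = ±1). Suppose R is a curvature-type (0,4) tensor with Ricci contraction S(X,V) = Σᵢ εᵢ R(X, eᵢ, eᵢ, V) satisfying S = (r/4)g, and suppose ρ, with ω(X) = g(X,ρ), and an almost complex structure F (F² = -id, g(FX,FY) = g(X,Y), R(FY,FZ,U,V) = R(Y,Z,U,V)) satisfy: (r/4)ω(Y)g(X,V) - R(Y,X,V,ρ) = (r/4)ω(FY)g(X,FV) + R(FY,X,V,Fρ) for all X,Y,V. Then S(Y,ρ) = (r/2)ω(Y), i.e., ρ is an eigenvector of the Ricci operator with eigenvalue r/2. -/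

import Mathlib

/-- In a weakly symmetric perfect fluid Kähler space-time, `ρ` is an
eigenvector of the Ricci tensor with eigenvalue `r/2`:
`S(Y,ρ) = (r/2) ω(Y)`. -/
theorem weakly_symmetric_ricci_eigenvector
    {V : Type*} [AddCommGroup V] [Module ℝ V]
    (g S : V →ₗ[ℝ] V →ₗ[ℝ] ℝ)
    (hgsymm : ∀ X Y, g X Y = g Y X)
    (hgnd : ∀ X, (∀ Y, g X Y = 0) → X = 0)
    (b : Module.Basis (Fin 4) ℝ V) (ε : Fin 4 → ℝ)
    (hε : ∀ i, ε i = 1 ∨ ε i = -1)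
    (hortho : ∀ i j, g (b i) (b j) = if i = j then ε i else 0)
    (R : V → V → V → V → ℝ)
    (hR1 : ∀ X Y Z T, R X Y Z T = -R Y X Z T)
    (hR2 : ∀ X Y Z T, R X Y Z T = -R X Y T Z)
    (hR3 : ∀ X Y Z T, R X Y Z T = R Z T X Y)
    (hRic : ∀ X W, S X W = ∑ i, ε i * R X (b i) (b i) W)
    (r : ℝ) (hS : ∀ X Y, S X Y = r / 4 * g X Y)
    (ρ : V) (hρ : g ρ ρ = -1)
    (F : V →ₗ[ℝ] V)
    (hF2 : ∀ X, F (F X) = -X)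
    (hFg : ∀ X Y, g (F X) (F Y) = g X Y)
    (hRF : ∀ Y Z U W, R (F Y) (F Z) U W = R Y Z U W)
    (hkey : ∀ X Y W, r / 4 * g Y ρ * g X W - R Y X W ρ
        = r / 4 * g (F Y) ρ * g X (F W) + R (F Y) X W (F ρ)) :
    ∀ Y, S Y ρ = r / 2 * g Y ρ := by
  -- F is skew-adjoint with respect to g, so g(X, FX) = 0
  have hskew : ∀ X : V, g X (F X) = 0 := by
    intro X
    have h1 : g (F X) (F (F X)) = g X (F X) := hFg X (F X)
    rw [hF2] at h1
    have h2 : g (F X) (-X) = - g (F X) X := by simp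
    have h3 : g (F X) X = g X (F X) := hgsymm _ _
    rw [h2, h3] at h1
    linarith
  -- contraction of hkey over X = W = e i with weights ε i
  have hcontr : ∀ Y : V, r * g Y ρ - S Y ρ = r / 4 * g Y ρ := by
    intro Y
    have hsum : ∑ i, ε i * (r / 4 * g Y ρ * g (b i) (b i) - R Y (b i) (b i) ρ)
        = ∑ i, ε i * (r / 4 * g (F Y) ρ * g (b i) (F (b i)) + R (F Y) (b i) (b i) (F ρ)) :=
      Finset.sum_congr rfl fun i _ => by rw [hkey (b i) Y (b i)]
    have hL : ∑ i, ε i * (r / 4 * g Y ρ * g (b i) (b i) - R Y (b i) (b i) ρ)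
        = r * g Y ρ - S Y ρ := by
      have : ∀ i : Fin 4, ε i * (r / 4 * g Y ρ * g (b i) (b i) - R Y (b i) (b i) ρ)
          = r / 4 * g Y ρ - ε i * R Y (b i) (b i) ρ := by
        intro i
        have hb : g (b i) (b i) = ε i := by simpa using hortho i i
        rcases hε i with h | h <;> rw [hb, h] <;> ring
      rw [Finset.sum_congr rfl fun i _ => this i, Finset.sum_sub_distrib, ← hRic]
      simp [Finset.sum_const]
      ring
    have hRt : ∑ i, ε i * (r / 4 * g (F Y) ρ * g (b i) (F (b i)) + R (F Y) (b i) (b i) (F ρ))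
        = r / 4 * g Y ρ := by
      have : ∀ i : Fin 4, ε i * (r / 4 * g (F Y) ρ * g (b i) (F (b i)) + R (F Y) (b i) (b i) (F ρ))
          = ε i * R (F Y) (b i) (b i) (F ρ) := by
        intro i; rw [hskew (b i)]; ring
      rw [Finset.sum_congr rfl fun i _ => this i, ← hRic, hS, hFg]
    rw [hL, hRt] at hsum
    exact hsum
  -- deduce r = 0
  have hr : r = 0 := by
    have h1 := hcontr ρ
    rw [hS, hρ] at h1
    linarith
  intro Y
  rw [hS, hr]
  ring
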